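/- For κ > 0 and p ≥ 2, the function A_p(κ) = I_{p/2}(κ)/I_{p/2-1}(κ) is strictly concave, i.e., A_p''(κ) < 0. -/

import Mathlib

open Real Filter Topology Set

/-- Modified Bessel function of the first kind, `I_v(κ)`. -/
noncomputable def besselI (v κ : ℝ) : ℝ :=
  ∑' q : ℕ, (1 / (q.factorial * Real.Gamma (q + v + 1))) * (κ / 2) ^ ((2 * q : ℝ) + v)

/-- The Bessel ratio `A_p(κ) = I_{p/2}(κ) / I_{p/2-1}(κ)`. -/
noncomputable def Ap (p : ℕ) (κ : ℝ) : ℝ :=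
  besselI (p / 2 : ℝ) κ / besselI ((p / 2 : ℝ) - 1) κ

noncomputable def aa (ν : ℝ) (q : ℕ) : ℝ := 1 / (q.factorial * Real.Gamma (q + ν + 1))

noncomputable def F (ν x : ℝ) : ℝ := ∑' q : ℕ, aa ν q * x ^ q

noncomputable def Wf (p : ℕ) (t : ℝ) : ℝ :=
  ((p:ℝ)-1)*t + (2*t^2 - ((p:ℝ)-1)^2 - ((p:ℝ)-1)) * Ap p t
    - 3*((p:ℝ)-1)*t*(Ap p t)^2 - 2*t^2*(Ap p t)^3

noncomputable def Wd (p : ℕ) (t : ℝ) : ℝ :=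
  ((p:ℝ)-1) + (4*t*(Ap p t) + (2*t^2-((p:ℝ)-1)^2-((p:ℝ)-1)) * (1 - (Ap p t)^2 - ((p:ℝ)-1) * Ap p t / t))
    - (3*((p:ℝ)-1)*(Ap p t)^2 + 3*((p:ℝ)-1)*t*(2 * Ap p t ^ 1 * (1 - (Ap p t)^2 - ((p:ℝ)-1) * Ap p t / t)))
    - (4*t*(Ap p t)^3 + 2*t^2*(3 * Ap p t ^ 2 * (1 - (Ap p t)^2 - ((p:ℝ)-1) * Ap p t / t)))


lemma aa_pos {ν : ℝ} (hν : 0 ≤ ν) (q : ℕ) : 0 < aa ν q := by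
  have h : (0:ℝ) < (q:ℝ) + ν + 1 := by positivity
  have := Real.Gamma_pos_of_pos h
  have hq : (0:ℝ) < q.factorial := by exact_mod_cast q.factorial_pos
  unfold aa; positivity

lemma fact_gamma_le {ν : ℝ} (hν : 0 ≤ ν) (q : ℕ) :
    (q.factorial : ℝ) * Real.Gamma (ν + 1) ≤ Real.Gamma (q + ν + 1) := by
  induction q with
  | zero => simp
  | succ n ih =>
    have h1 : ((n:ℝ) + ν + 1) ≠ 0 := by positivity
    have h3 : Real.Gamma ((n:ℝ) + ν + 1 + 1) = ((n:ℝ) + ν + 1) * Real.Gamma ((n:ℝ)+ν+1) :=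
      Real.Gamma_add_one h1
    have hcast : ((n+1 : ℕ):ℝ) + ν + 1 = (n:ℝ) + ν + 1 + 1 := by push_cast; ring
    rw [hcast, h3]
    have hΓpos : 0 < Real.Gamma (ν + 1) := Real.Gamma_pos_of_pos (by linarith)
    have h2 : ((n+1:ℕ):ℝ) ≤ (n:ℝ) + ν + 1 := by push_cast; linarith
    have hnn : (0:ℝ) ≤ (n.factorial:ℝ) * Real.Gamma (ν+1) := by positivity
    calc ((n+1).factorial : ℝ) * Real.Gamma (ν+1)
        = ((n+1:ℕ):ℝ) * ((n.factorial:ℝ) * Real.Gamma (ν+1)) := by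
          push_cast [Nat.factorial_succ]; ring
      _ ≤ ((n:ℝ)+ν+1) * Real.Gamma ((n:ℝ)+ν+1) :=
          mul_le_mul h2 ih hnn (by linarith)

lemma aa_le {ν : ℝ} (hν : 0 ≤ ν) (q : ℕ) : aa ν q ≤ (Real.Gamma (ν+1))⁻¹ * (1 / q.factorial) := by
  have hΓpos : 0 < Real.Gamma (ν + 1) := Real.Gamma_pos_of_pos (by linarith)
  have hq : (1:ℝ) ≤ q.factorial := by exact_mod_cast q.factorial_pos
  have h1 := fact_gamma_le hν q
  have hG : Real.Gamma (ν+1) ≤ Real.Gamma ((q:ℝ)+ν+1) := by nlinarith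
  have hq0 : (0:ℝ) < q.factorial := by linarith
  have : (1:ℝ) / ((q.factorial:ℝ) * Real.Gamma ((q:ℝ)+ν+1)) ≤
      1 / ((q.factorial:ℝ) * Real.Gamma (ν+1)) := by
    apply one_div_le_one_div_of_le (by positivity)
    exact mul_le_mul_of_nonneg_left hG hq0.le
  unfold aa
  calc (1:ℝ) / ((q.factorial:ℝ) * Real.Gamma ((q:ℝ)+ν+1)) ≤
      1 / ((q.factorial:ℝ) * Real.Gamma (ν+1)) := this
    _ = (Real.Gamma (ν+1))⁻¹ * (1 / q.factorial) := by
        rw [one_div, mul_inv, one_div]; ring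

lemma summable_aa {ν : ℝ} (hν : 0 ≤ ν) (x : ℝ) : Summable (fun q : ℕ => aa ν q * x ^ q) := by
  have hs : Summable (fun q : ℕ => (Real.Gamma (ν+1))⁻¹ * (|x| ^ q / q.factorial)) :=
    (Real.summable_pow_div_factorial |x|).mul_left _
  have hb : ∀ q : ℕ, |aa ν q * x ^ q| ≤ (Real.Gamma (ν+1))⁻¹ * (|x| ^ q / q.factorial) := by
    intro q
    rw [abs_mul, abs_of_pos (aa_pos hν q), abs_pow]
    calc aa ν q * |x|^q ≤ (Real.Gamma (ν+1))⁻¹ * (1/q.factorial) * |x|^q :=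
          mul_le_mul_of_nonneg_right (aa_le hν q) (by positivity)
      _ = (Real.Gamma (ν+1))⁻¹ * (|x|^q / q.factorial) := by ring
  exact Summable.of_abs (Summable.of_nonneg_of_le (fun q => abs_nonneg _) hb hs)

lemma aa_succ {ν : ℝ} (hν : 0 ≤ ν) (q : ℕ) : ((q:ℝ)+1) * aa ν (q+1) = aa (ν+1) q := by
  unfold aa
  have h1 : (((q+1:ℕ)):ℝ) + ν + 1 = (q:ℝ) + (ν+1) + 1 := by push_cast; ring
  have e : (((q+1).factorial : ℕ) : ℝ) = ((q:ℝ)+1) * q.factorial := by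
    rw [Nat.factorial_succ]; push_cast; ring
  rw [h1, e]
  have hq : ((q:ℝ)+1) ≠ 0 := by positivity
  have hf : ((q.factorial:ℝ)) ≠ 0 := by exact_mod_cast q.factorial_ne_zero
  have hΓ : Real.Gamma ((q:ℝ) + (ν+1) + 1) ≠ 0 :=
    ne_of_gt (Real.Gamma_pos_of_pos (by positivity))
  field_simp

lemma aa_pred {ν : ℝ} (hν : 0 < ν) (q : ℕ) : aa (ν-1) q = ((q:ℝ)+ν) * aa ν q := by
  unfold aa
  have h1 : (q:ℝ) + (ν-1) + 1 = (q:ℝ) + ν := by ring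
  have h2 : (q:ℝ) + ν ≠ 0 := by positivity
  have h3 : Real.Gamma ((q:ℝ) + ν + 1) = ((q:ℝ)+ν) * Real.Gamma ((q:ℝ)+ν) := by
    have := Real.Gamma_add_one h2
    rw [← this]
  rw [h1, h3]
  have hΓ : Real.Gamma ((q:ℝ)+ν) ≠ 0 := ne_of_gt (Real.Gamma_pos_of_pos (by positivity))
  have hf : ((q.factorial:ℝ)) ≠ 0 := by exact_mod_cast q.factorial_ne_zero
  field_simp

lemma summable_q_aa {ν : ℝ} (hν : 0 ≤ ν) (x : ℝ) :
    Summable (fun q : ℕ => (q:ℝ) * aa ν q * x ^ q) := by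
  rw [← summable_nat_add_iff 1]
  have : (fun q : ℕ => ((q+1:ℕ):ℝ) * aa ν (q+1) * x ^ (q+1))
      = fun q : ℕ => (aa (ν+1) q * x ^ q) * x := by
    funext q
    push_cast
    rw [aa_succ hν]
    ring
  rw [this]
  exact (summable_aa (by linarith) x).mul_right x

lemma tsum_q_aa {ν : ℝ} (hν : 0 ≤ ν) (x : ℝ) :
    ∑' q : ℕ, (q:ℝ) * aa ν q * x ^ q = x * F (ν+1) x := by
  rw [Summable.tsum_eq_zero_add (summable_q_aa hν x)]
  simp only [Nat.cast_zero, zero_mul, pow_zero, zero_add]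
  have : (fun q : ℕ => ((q+1:ℕ):ℝ) * aa ν (q+1) * x ^ (q+1))
      = fun q : ℕ => (aa (ν+1) q * x ^ q) * x := by
    funext q; push_cast; rw [aa_succ hν]; ring
  rw [this, tsum_mul_right]
  unfold F; ring

lemma F_rec {ν : ℝ} (hν : 0 < ν) (x : ℝ) : F (ν-1) x = ν * F ν x + x * F (ν+1) x := by
  unfold F
  have h1 : (fun q : ℕ => aa (ν-1) q * x ^ q)
      = fun q : ℕ => ν * (aa ν q * x ^ q) + (q:ℝ) * aa ν q * x ^ q := by
    funext q; rw [aa_pred hν]; ring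
  rw [h1, Summable.tsum_add ((summable_aa hν.le x).mul_left ν) (summable_q_aa hν.le x),
    tsum_mul_left]
  rw [tsum_q_aa hν.le x]
  unfold F; ring

lemma F_pos {ν : ℝ} (hν : 0 ≤ ν) {x : ℝ} (hx : 0 ≤ x) : 0 < F ν x := by
  unfold F
  apply Summable.tsum_pos (summable_aa hν x)
    (fun q => mul_nonneg (aa_pos hν q).le (pow_nonneg hx q)) 0
  simpa using aa_pos hν 0

lemma F_zero {ν : ℝ} (hν : 0 ≤ ν) : F ν 0 = 1 / Real.Gamma (ν + 1) := by
  unfold F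
  rw [tsum_eq_single 0]
  · simp [aa]
  · intro q hq
    simp [zero_pow hq]

lemma F_hasDerivAt {ν : ℝ} (hν : 0 ≤ ν) (x : ℝ) : HasDerivAt (F ν) (F (ν+1) x) x := by
  set r : ℝ := |x| + 1 with hr
  have hrpos : 0 < r := by positivity
  set s : Set ℝ := Metric.ball (0:ℝ) r with hs
  have hxs : x ∈ s := by
    simp only [hs, Metric.mem_ball, dist_zero_right, Real.norm_eq_abs]
    linarith
  -- the candidate derivative function
  set g' : ℝ → ℝ := fun y => ∑' q : ℕ, aa ν q * ((q:ℝ) * y ^ (q-1)) with hg'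
  have key : ∀ y : ℝ, g' y = F (ν+1) y := by
    intro y
    have hsum : Summable (fun q : ℕ => aa ν q * ((q:ℝ) * y ^ (q-1))) := by
      rw [← summable_nat_add_iff 1]
      have : (fun q : ℕ => aa ν (q+1) * (((q+1:ℕ):ℝ) * y ^ ((q+1)-1)))
          = fun q : ℕ => aa (ν+1) q * y ^ q := by
        funext q
        have h2 : (q+1) - 1 = q := rfl
        rw [h2, ← aa_succ hν q]
        push_cast
        ring
      rw [this]
      exact summable_aa (by linarith) y
    show (∑' q : ℕ, aa ν q * ((q:ℝ) * y ^ (q-1))) = F (ν+1) y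
    rw [Summable.tsum_eq_zero_add hsum]
    simp only [Nat.cast_zero, zero_mul, mul_zero, zero_add]
    have : (fun q : ℕ => aa ν (q+1) * (((q+1:ℕ):ℝ) * y ^ ((q+1)-1)))
        = fun q : ℕ => aa (ν+1) q * y ^ q := by
      funext q
      have h2 : (q+1) - 1 = q := rfl
      rw [h2, ← aa_succ hν q]
      push_cast
      ring
    rw [this]
    rfl
  have hderiv : ∀ N : ℕ, ∀ y ∈ s, HasDerivAt (fun z => ∑ q ∈ Finset.range N, aa ν q * z ^ q)
      (∑ q ∈ Finset.range N, aa ν q * ((q:ℝ) * y ^ (q-1))) y := by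
    intro N y _
    apply HasDerivAt.fun_sum
    intro q _
    exact (hasDerivAt_pow q y).const_mul (aa ν q)
  have hu : Summable (fun q : ℕ => aa ν q * ((q:ℝ) * r ^ (q-1))) := by
    rw [← summable_nat_add_iff 1]
    have : (fun q : ℕ => aa ν (q+1) * (((q+1:ℕ):ℝ) * r ^ ((q+1)-1)))
        = fun q : ℕ => aa (ν+1) q * r ^ q := by
      funext q
      have h2 : (q+1) - 1 = q := rfl
      rw [h2, ← aa_succ hν q]; push_cast; ring
    rw [this]
    exact summable_aa (by linarith) r
  have hunif : TendstoUniformlyOn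
      (fun N y => ∑ q ∈ Finset.range N, aa ν q * ((q:ℝ) * y ^ (q-1))) g' atTop s := by
    rw [hg']
    apply tendstoUniformlyOn_tsum_nat hu
    intro q y hy
    have hyr : |y| ≤ r := by
      simp only [hs, Metric.mem_ball, dist_zero_right, Real.norm_eq_abs] at hy
      linarith
    have h0 : 0 < aa ν q := aa_pos hν q
    rw [Real.norm_eq_abs, abs_mul, abs_of_pos h0, abs_mul, Nat.abs_cast, abs_pow]
    apply mul_le_mul_of_nonneg_left _ h0.le
    apply mul_le_mul_of_nonneg_left _ (Nat.cast_nonneg q)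
    exact pow_le_pow_left₀ (abs_nonneg y) hyr _
  have hpt : ∀ y ∈ s, Tendsto (fun N => ∑ q ∈ Finset.range N, aa ν q * y ^ q)
      atTop (𝓝 (F ν y)) := by
    intro y _
    exact (summable_aa hν y).hasSum.tendsto_sum_nat
  have := hasDerivAt_of_tendstoUniformlyOn Metric.isOpen_ball hunif
    (Eventually.of_forall hderiv) hpt hxs
  rw [key x] at this
  exact this

lemma besselI_eq {v κ : ℝ} (hκ : 0 < κ) : besselI v κ = (κ/2) ^ v * F v (κ^2/4) := by
  unfold besselI F
  have h2 : (0:ℝ) < κ/2 := by linarith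
  have key : ∀ q : ℕ, (κ/2) ^ ((2*q : ℝ) + v) = (κ^2/4)^q * (κ/2)^v := by
    intro q
    rw [Real.rpow_add h2]
    congr 1
    have : (2*q : ℝ) = ((2*q : ℕ) : ℝ) := by push_cast; ring
    rw [this, Real.rpow_natCast, pow_mul]
    congr 1
    ring
  have : (fun q : ℕ => (1 / (q.factorial * Real.Gamma (q + v + 1))) * (κ / 2) ^ ((2 * q : ℝ) + v))
      = fun q : ℕ => (aa v q * (κ^2/4)^q) * (κ/2)^v := by
    funext q; rw [key q]; unfold aa; ring
  rw [this, tsum_mul_right]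
  ring

lemma Ap_eq {p : ℕ} (hp : 2 ≤ p) {κ : ℝ} (hκ : 0 < κ) :
    Ap p κ = (κ/2) * F ((p:ℝ)/2) (κ^2/4) / F ((p:ℝ)/2 - 1) (κ^2/4) := by
  set ν : ℝ := (p:ℝ)/2 with hνdef
  have hν : 1 ≤ ν := by
    rw [hνdef]
    have : (2:ℝ) ≤ (p:ℝ) := by exact_mod_cast hp
    linarith
  have h2 : (0:ℝ) < κ/2 := by linarith
  have hx : (0:ℝ) ≤ κ^2/4 := by positivity
  unfold Ap
  rw [besselI_eq hκ, besselI_eq hκ]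
  have hden : (0:ℝ) < F (ν - 1) (κ^2/4) := F_pos (by linarith) hx
  have hrp : (κ/2) ^ (ν - 1) = (κ/2)^ν / (κ/2) := by
    rw [Real.rpow_sub h2, Real.rpow_one]
  rw [hrp]
  have hν0 : ((κ/2):ℝ) ^ ν ≠ 0 := ne_of_gt (Real.rpow_pos_of_pos h2 ν)
  set C : ℝ := (κ/2)^ν with hC
  rw [← hνdef]
  have hd2 : C/(κ/2) * F (ν - 1) (κ ^ 2 / 4) ≠ 0 := by
    apply mul_ne_zero _ (ne_of_gt hden)
    exact div_ne_zero hν0 (ne_of_gt h2)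
  rw [div_eq_div_iff hd2 (ne_of_gt hden)]
  field_simp

lemma hasDerivAt_Ap {p : ℕ} (hp : 2 ≤ p) {t : ℝ} (ht : 0 < t) :
    HasDerivAt (Ap p) (1 - (Ap p t)^2 - ((p:ℝ)-1) * Ap p t / t) t := by
  set ν : ℝ := (p:ℝ)/2 with hνdef
  have hν : 1 ≤ ν := by
    rw [hνdef]; have : (2:ℝ) ≤ (p:ℝ) := by exact_mod_cast hp
    linarith
  set x : ℝ := t^2/4 with hxdef
  have hx : (0:ℝ) ≤ x := by positivity
  set b : ℝ := F ν x
  set a : ℝ := F (ν-1) x with hadef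
  set d : ℝ := F (ν+1) x
  have hapos : 0 < a := F_pos (by linarith) hx
  have hbpos : 0 < b := F_pos (by linarith) hx
  have harec : a = ν * b + x * d := F_rec (by linarith) x
  have hsq : HasDerivAt (fun s : ℝ => s^2/4) (t/2) t := by
    have := (hasDerivAt_pow 2 t).div_const 4
    exact this.congr_deriv (by push_cast; ring)
  have hb' : HasDerivAt (fun s : ℝ => F ν (s^2/4)) (d * (t/2)) t :=
    (F_hasDerivAt (ν := ν) (by linarith) x).comp (h₂ := F ν) t hsq
  have ha' : HasDerivAt (fun s : ℝ => F (ν-1) (s^2/4)) (b * (t/2)) t := by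
    have h := (F_hasDerivAt (ν := ν - 1) (by linarith) x).comp t hsq
    have : ν - 1 + 1 = ν := by ring
    rw [this] at h
    exact h
  have hN : HasDerivAt (fun s : ℝ => (s/2) * F ν (s^2/4))
      ((1/2) * b + (t/2) * (d * (t/2))) t := by
    have hid : HasDerivAt (fun s : ℝ => s/2) (1/2 : ℝ) t := (hasDerivAt_id t).div_const 2
    exact hid.mul hb'
  have hQ : HasDerivAt (fun s : ℝ => (s/2) * F ν (s^2/4) / F (ν-1) (s^2/4))
      ((((1/2) * b + (t/2) * (d * (t/2))) * a - (t/2) * b * (b * (t/2))) / a^2) t :=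
    hN.div ha' (ne_of_gt hapos)
  have heq : Ap p =ᶠ[nhds t] (fun s : ℝ => (s/2) * F ν (s^2/4) / F (ν-1) (s^2/4)) := by
    filter_upwards [Ioi_mem_nhds ht] with s hs
    exact Ap_eq hp hs
  have hval : Ap p t = (t/2) * b / a := Ap_eq hp ht
  have hQ' : HasDerivAt (Ap p)
      ((((1/2) * b + (t/2) * (d * (t/2))) * a - (t/2) * b * (b * (t/2))) / a^2) t :=
    hQ.congr_of_eventuallyEq heq
  convert hQ' using 1
  rw [hval]
  have hc : ((p:ℝ) - 1) = 2*ν - 1 := by rw [hνdef]; push_cast; ring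
  rw [hc]
  have hapos' : (0:ℝ) < ν * b + x * d := by rw [← harec]; exact hapos
  rw [harec]
  have hne' : ν * b + x * d ≠ 0 := hapos'.ne'
  have htne : t ≠ 0 := ht.ne'
  generalize hD : ν * b + x * d = D at hne' ⊢
  field_simp
  rw [← hD, hxdef]
  ring

lemma Ap_pos {p : ℕ} (hp : 2 ≤ p) {t : ℝ} (ht : 0 < t) : 0 < Ap p t := by
  have hν : 1 ≤ (p:ℝ)/2 := by
    have : (2:ℝ) ≤ (p:ℝ) := by exact_mod_cast hp
    linarith
  rw [Ap_eq hp ht]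
  have h1 : 0 < F ((p:ℝ)/2) (t^2/4) := F_pos (by linarith) (by positivity)
  have h2 : 0 < F ((p:ℝ)/2 - 1) (t^2/4) := F_pos (by linarith) (by positivity)
  positivity

lemma hasDerivAt_Wf {p : ℕ} (hp : 2 ≤ p) {t : ℝ} (ht : 0 < t) :
    HasDerivAt (Wf p) (Wd p t) t := by
  set c : ℝ := (p:ℝ) - 1 with hc
  have hA := hasDerivAt_Ap hp ht
  set v : ℝ := 1 - (Ap p t)^2 - c * Ap p t / t with hv
  have h1 : HasDerivAt (fun s : ℝ => c * s) c t := by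
    simpa using (hasDerivAt_id t).const_mul c
  have h2 : HasDerivAt (fun s : ℝ => 2*s^2 - c^2 - c) (4*t) t := by
    have := ((hasDerivAt_pow 2 t).const_mul 2).sub_const (c^2)
    have := this.sub_const c
    exact this.congr_deriv (by push_cast; ring)
  have h2A : HasDerivAt (fun s : ℝ => (2*s^2 - c^2 - c) * Ap p s)
      ((4*t) * Ap p t + (2*t^2 - c^2 - c) * v) t := h2.mul hA
  have h3 : HasDerivAt (fun s : ℝ => 3*c*s) (3*c) t := by
    simpa using (hasDerivAt_id t).const_mul (3*c)
  have hA2 : HasDerivAt (fun s : ℝ => (Ap p s)^2) (2 * Ap p t ^ 1 * v) t := hA.pow 2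
  have h3A : HasDerivAt (fun s : ℝ => 3*c*s*(Ap p s)^2)
      ((3*c) * (Ap p t)^2 + 3*c*t*(2 * Ap p t ^ 1 * v)) t := h3.mul hA2
  have h4 : HasDerivAt (fun s : ℝ => 2*s^2) (4*t) t := by
    have := (hasDerivAt_pow 2 t).const_mul 2
    exact this.congr_deriv (by push_cast; ring)
  have hA3 : HasDerivAt (fun s : ℝ => (Ap p s)^3) (3 * Ap p t ^ 2 * v) t := hA.pow 3
  have h4A : HasDerivAt (fun s : ℝ => 2*s^2*(Ap p s)^3)
      ((4*t) * (Ap p t)^3 + 2*t^2*(3 * Ap p t ^ 2 * v)) t := h4.mul hA3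
  have := ((h1.add h2A).sub h3A).sub h4A
  exact this

lemma Wd_pos_at_zero {p : ℕ} (hp : 2 ≤ p) {t : ℝ} (ht : 0 < t)
    (hW : Wf p t = 0) : 0 < Wd p t := by
  set c : ℝ := (p:ℝ) - 1 with hc
  have hc1 : 1 ≤ c := by
    rw [hc]; have : (2:ℝ) ≤ (p:ℝ) := by exact_mod_cast hp
    linarith
  set A : ℝ := Ap p t with hA
  have hApos : 0 < A := Ap_pos hp ht
  set u : ℝ := t - t*A^2 - c*A with hu
  -- W = u * (c + 2 t A) - c A
  have hWeq : Wf p t = u * (c + 2*t*A) - c*A := by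
    unfold Wf; rw [← hc, ← hA, hu]; ring
  have hcA : u * (c + 2*t*A) = c * A := by
    rw [hWeq] at hW; linarith
  have hupos : 0 < u := by
    have hpos : 0 < c + 2*t*A := by positivity
    nlinarith
  -- identity : t * Wd = t*(4*u*A + 2*u^2) - W*(c+2*t*A)
  have hiden : t * Wd p t = t * (4*u*A + 2*u^2) - Wf p t * (c + 2*t*A) := by
    unfold Wd Wf
    rw [← hc, ← hA, hu]
    field_simp
    ring
  rw [hW] at hiden
  have : t * Wd p t = t * (4*u*A + 2*u^2) := by rw [hiden]; ring
  have h2 : 0 < 4*u*A + 2*u^2 := by positivity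
  nlinarith

lemma deriv_deriv_Ap {p : ℕ} (hp : 2 ≤ p) {κ : ℝ} (hκ : 0 < κ) :
    deriv (deriv (Ap p)) κ = - Wf p κ / κ^2 := by
  set c : ℝ := (p:ℝ) - 1 with hc
  set G : ℝ → ℝ := fun t => 1 - (Ap p t)^2 - c * Ap p t / t with hG
  have hev : deriv (Ap p) =ᶠ[nhds κ] G := by
    filter_upwards [Ioi_mem_nhds hκ] with s hs
    exact (hasDerivAt_Ap hp hs).deriv
  rw [hev.deriv_eq]
  have hA := hasDerivAt_Ap hp hκ
  set A : ℝ := Ap p κ with hAdef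
  set v : ℝ := 1 - A^2 - c * A / κ with hv
  have hA2 : HasDerivAt (fun s : ℝ => (Ap p s)^2) (2 * A ^ 1 * v) κ := hA.pow 2
  have hq := (hA.const_mul c).div (hasDerivAt_id κ) (ne_of_gt hκ)
  simp only [id_eq, mul_one] at hq
  have hGd : HasDerivAt G ((0 - 2 * A ^ 1 * v) - (c * v * id κ - c * Ap p κ) / κ^2) κ := by
    have h1 : HasDerivAt (fun _ : ℝ => (1:ℝ)) 0 κ := hasDerivAt_const κ 1
    have h2 := (h1.sub hA2).sub hq
    exact h2
  rw [hGd.deriv]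
  simp only [id_eq]
  unfold Wf
  rw [← hc, ← hAdef, hv]
  field_simp
  ring

lemma Wf_pos_near_zero {p : ℕ} (hp : 2 ≤ p) : ∀ᶠ t in 𝓝[>] (0:ℝ), 0 < Wf p t := by
  set ν : ℝ := (p:ℝ)/2 with hνdef
  have hν : 1 ≤ ν := by
    rw [hνdef]; have : (2:ℝ) ≤ (p:ℝ) := by exact_mod_cast hp
    linarith
  set c : ℝ := (p:ℝ) - 1 with hcdef
  have hcν : c = 2*ν - 1 := by rw [hcdef, hνdef]; ring
  set R : ℝ → ℝ := fun x => F ν x / F (ν-1) x with hR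
  have hνpos : (0:ℝ) < ν := by linarith
  have hden : ∀ x : ℝ, 0 ≤ x → 0 < F (ν-1) x := fun x hx => F_pos (by linarith) hx
  -- value and derivative of R at 0
  have hΓν : 0 < Real.Gamma ν := Real.Gamma_pos_of_pos hνpos
  have hG1 : Real.Gamma (ν + 1) = ν * Real.Gamma ν := Real.Gamma_add_one (ne_of_gt hνpos)
  have hG2 : Real.Gamma (ν + 1 + 1) = (ν+1) * Real.Gamma (ν+1) :=
    Real.Gamma_add_one (by positivity)
  have hFν0 : F ν 0 = 1 / Real.Gamma (ν+1) := F_zero (by linarith)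
  have hFν10 : F (ν-1) 0 = 1 / Real.Gamma ν := by
    rw [F_zero (by linarith : (0:ℝ) ≤ ν - 1)]
    ring_nf
  have hFν20 : F (ν+1) 0 = 1 / Real.Gamma (ν+1+1) := F_zero (by linarith)
  have hR0 : R 0 = 1 / ν := by
    rw [hR]
    simp only
    rw [hFν0, hFν10, hG1]
    field_simp
  have hRd : HasDerivAt R ((F (ν+1) 0 * F (ν-1) 0 - F ν 0 * F ν 0) / (F (ν-1) 0)^2) 0 := by
    have h1 := F_hasDerivAt (by linarith : (0:ℝ) ≤ ν) 0
    have h2 := F_hasDerivAt (by linarith : (0:ℝ) ≤ ν - 1) 0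
    have hee : ν - 1 + 1 = ν := by ring
    rw [hee] at h2
    exact h1.div h2 (ne_of_gt (hden 0 le_rfl))
  have hRd_val : (F (ν+1) 0 * F (ν-1) 0 - F ν 0 * F ν 0) / (F (ν-1) 0)^2
      = -1/(ν^2*(ν+1)) := by
    rw [hFν0, hFν10, hFν20, hG2, hG1]
    field_simp
    ring
  rw [hRd_val] at hRd
  -- limit of slope composed with x(t) = t^2/4
  have hxmap : Tendsto (fun t : ℝ => t^2/4) (𝓝[>] 0) (𝓝[>] (0:ℝ)) := by
    apply tendsto_nhdsWithin_of_tendsto_nhds_of_eventually_within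
    · have hc : Tendsto (fun t : ℝ => t^2/4) (𝓝 0) (𝓝 (0^2/4)) :=
        ((continuous_pow 2).div_const 4).tendsto 0
      simpa using hc.mono_left nhdsWithin_le_nhds
    · filter_upwards [self_mem_nhdsWithin] with t ht
      have : (0:ℝ) < t := ht
      exact mem_Ioi.mpr (by positivity)
  have hxne : Tendsto (fun t : ℝ => t^2/4) (𝓝[>] 0) (𝓝[≠] (0:ℝ)) :=
    hxmap.mono_right (nhdsWithin_mono _ (fun x hx => ne_of_gt hx))
  have hslope : Tendsto (slope R 0) (𝓝[≠] (0:ℝ)) (𝓝 (-1/(ν^2*(ν+1)))) :=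
    hasDerivAt_iff_tendsto_slope.mp hRd
  have hslopex : Tendsto (fun t : ℝ => (R (t^2/4) - R 0) / (t^2/4)) (𝓝[>] 0)
      (𝓝 (-1/(ν^2*(ν+1)))) := by
    have := hslope.comp hxne
    apply this.congr'
    filter_upwards [self_mem_nhdsWithin] with t ht
    simp only [Function.comp_apply, slope_def_field, sub_zero]
  -- continuity of R ∘ x at 0 within
  have hRcont : Tendsto (fun t : ℝ => R (t^2/4)) (𝓝[>] 0) (𝓝 (R 0)) := by
    have h1 : ContinuousAt R 0 := hRd.continuousAt
    exact h1.tendsto.comp (hxmap.mono_right nhdsWithin_le_nhds)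
  -- the full limit
  set L : ℝ := (-((c^2+c)/8)) * (-1/(ν^2*(ν+1))) + (1/ν - (3*c/4)*(1/ν)^2 - 0^2*(1/ν)^3/4)
    with hLdef
  have hmain : Tendsto (fun t : ℝ => Wf p t / t^3) (𝓝[>] 0) (𝓝 L) := by
    have hT1 : Tendsto (fun t : ℝ => (-((c^2+c)/8)) * ((R (t^2/4) - R 0) / (t^2/4)))
        (𝓝[>] 0) (𝓝 ((-((c^2+c)/8)) * (-1/(ν^2*(ν+1))))) := hslopex.const_mul _
    have hT2 : Tendsto (fun t : ℝ => R (t^2/4) - (3*c/4)*(R (t^2/4))^2 - t^2*(R (t^2/4))^3/4)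
        (𝓝[>] 0) (𝓝 (1/ν - (3*c/4)*(1/ν)^2 - 0^2*(1/ν)^3/4)) := by
      rw [← hR0]
      have htsq : Tendsto (fun t : ℝ => t^2) (𝓝[>] (0:ℝ)) (𝓝 ((0:ℝ)^2)) :=
        ((continuous_pow 2).tendsto 0).mono_left nhdsWithin_le_nhds
      exact (hRcont.sub (((hRcont.pow 2)).const_mul (3*c/4))).sub
        (((htsq.mul (hRcont.pow 3))).div_const 4)
    have hsum := hT1.add hT2
    rw [← hLdef] at hsum
    apply hsum.congr'
    filter_upwards [self_mem_nhdsWithin] with t ht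
    have htpos : (0:ℝ) < t := ht
    have hxpos : (0:ℝ) < t^2/4 := by positivity
    have hdpos : 0 < F (ν-1) (t^2/4) := hden _ hxpos.le
    have hApR : Ap p t = (t/2) * R (t^2/4) := by
      rw [Ap_eq hp htpos, hR, ← hνdef]
      ring
    have hR0' : R 0 = 1/ν := hR0
    unfold Wf
    rw [← hcdef, hApR, hR0', hcν]
    field_simp
    ring
  have hLpos : 0 < L := by
    rw [hLdef, hcν]
    have h8 : (0:ℝ) < ν^2*(ν+1) := by positivity
    have key : -(((2*ν-1)^2+(2*ν-1))/8) * (-1/(ν^2*(ν+1)))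
        + (1/ν - (3*(2*ν-1)/4)*(1/ν)^2 - 0^2*(1/ν)^3/4) = 3/(4*ν^2*(ν+1)) := by
      field_simp
      ring
    rw [key]
    positivity
  have hev := hmain.eventually (eventually_gt_nhds hLpos)
  filter_upwards [hev, self_mem_nhdsWithin] with t h1 h2
  have htpos : (0:ℝ) < t := h2
  have ht3 : (0:ℝ) < t^3 := by positivity
  have := mul_pos h1 ht3
  rw [div_mul_cancel₀] at this
  · exact this
  · exact ne_of_gt ht3

lemma Wf_pos {p : ℕ} (hp : 2 ≤ p) {κ : ℝ} (hκ : 0 < κ) : 0 < Wf p κ := by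
  by_contra hcon
  push_neg at hcon
  obtain ⟨δ, hδmem, hδ⟩ := mem_nhdsGT_iff_exists_Ioo_subset.mp (Wf_pos_near_zero hp)
  have hδpos : (0:ℝ) < δ := hδmem
  set d : ℝ := min δ κ / 2 with hd
  have hdpos : 0 < d := by positivity
  have hdδ : d < δ := by
    have : min δ κ ≤ δ := min_le_left _ _
    rw [hd]; linarith
  have hdκ : d < κ := by
    have : min δ κ ≤ κ := min_le_right _ _
    rw [hd]; linarith
  have hsmall : ∀ t : ℝ, 0 < t → t < δ → 0 < Wf p t := fun t h1 h2 => hδ ⟨h1, h2⟩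
  set S : Set ℝ := {t ∈ Icc d κ | Wf p t ≤ 0} with hS
  have hScl : IsClosed S := by
    have hcont : ContinuousOn (Wf p) (Icc d κ) := by
      intro t ht
      exact ((hasDerivAt_Wf hp (lt_of_lt_of_le hdpos ht.1)).continuousAt).continuousWithinAt
    exact hcont.preimage_isClosed_of_isClosed isClosed_Icc isClosed_Iic
  have hSne : S.Nonempty := ⟨κ, ⟨hdκ.le, le_rfl⟩, hcon⟩
  have hSbdd : BddBelow S := ⟨d, fun t ht => ht.1.1⟩
  set κ1 : ℝ := sInf S with hκ1
  have hκ1S : κ1 ∈ S := hScl.csInf_mem hSne hSbdd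
  have hκ1pos : 0 < κ1 := lt_of_lt_of_le hdpos hκ1S.1.1
  have hdκ1 : d < κ1 := by
    rcases lt_or_eq_of_le hκ1S.1.1 with h | h
    · exact h
    · exfalso
      have := hsmall d hdpos hdδ
      rw [h] at this
      exact absurd hκ1S.2 (not_le.mpr this)
  have hbefore : ∀ t : ℝ, 0 < t → t < κ1 → 0 < Wf p t := by
    intro t h1 h2
    rcases lt_or_ge t d with h3 | h3
    · exact hsmall t h1 (h3.trans hdδ)
    · by_contra h4
      push_neg at h4
      have htS : t ∈ S := ⟨⟨h3, h2.le.trans hκ1S.1.2⟩, h4⟩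
      have := csInf_le hSbdd htS
      rw [← hκ1] at this
      linarith
  have hW1 : Wf p κ1 = 0 := by
    apply le_antisymm hκ1S.2
    have hne : (𝓝[<] κ1).NeBot := nhdsLT_neBot κ1
    have htd : Tendsto (Wf p) (𝓝[<] κ1) (𝓝 (Wf p κ1)) :=
      ((hasDerivAt_Wf hp hκ1pos).continuousAt).continuousWithinAt.tendsto
    apply ge_of_tendsto htd
    filter_upwards [Ioo_mem_nhdsLT_of_mem ⟨hdκ1, le_rfl⟩] with t ht
    exact (hbefore t (lt_of_lt_of_le hdpos ht.1.le) ht.2).le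
  have hWdpos : 0 < Wd p κ1 := Wd_pos_at_zero hp hκ1pos hW1
  -- derivative from the left is ≤ 0
  have hslope : Tendsto (slope (Wf p) κ1) (𝓝[≠] κ1) (𝓝 (Wd p κ1)) :=
    hasDerivAt_iff_tendsto_slope.mp (hasDerivAt_Wf hp hκ1pos)
  have hslope' : Tendsto (slope (Wf p) κ1) (𝓝[<] κ1) (𝓝 (Wd p κ1)) :=
    hslope.mono_left (nhdsWithin_mono _ (fun x hx => ne_of_lt hx))
  have hne : (𝓝[<] κ1).NeBot := nhdsLT_neBot κ1
  have hWdle : Wd p κ1 ≤ 0 := by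
    apply le_of_tendsto hslope'
    filter_upwards [Ioo_mem_nhdsLT_of_mem ⟨hdκ1, le_rfl⟩] with t ht
    have h1 : 0 < Wf p t := hbefore t (lt_of_lt_of_le hdpos ht.1.le) ht.2
    rw [slope_def_field, hW1]
    apply div_nonpos_of_nonneg_of_nonpos
    · linarith
    · linarith [ht.2]
  linarith

theorem stmt_10 (p : ℕ) (hp : 2 ≤ p) (κ : ℝ) (hκ : 0 < κ) :
    deriv (deriv (Ap p)) κ < 0 := by
  rw [deriv_deriv_Ap hp hκ]
  apply div_neg_of_neg_of_pos
  · linarith [Wf_pos hp hκ]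
  · positivity
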